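/- Let T = ℤ/2 × ℤ/2, s = (1,0) ∈ T, R = T[x]/⟨sx, x²⟩, and S = {1, s}. Then R is a u-S-semisimple ring but R is not a semisimple ring (R is not reduced since x² = 0 with x ≠ 0). -/

import Mathlib

open Polynomial

/-- The base ring `T = ℤ/2 × ℤ/2`. -/
abbrev T19 : Type := ZMod 2 × ZMod 2

/-- The element `s = (1, 0)`. -/
def s19 : T19 := (1, 0)

/-- The ideal `⟨sx, x²⟩` of `T[x]`. -/
noncomputable def I19 : Ideal (Polynomial T19) := Ideal.span {C s19 * X, X ^ 2}

/-- The ring `R = T[x]/⟨sx, x²⟩`. -/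
abbrev R19 : Type := Polynomial T19 ⧸ I19

/-- The image of `s` in `R`. -/
noncomputable def sbar19 : R19 := Ideal.Quotient.mk I19 (C s19)

/-- The multiplicative set `S = {1, s}` (the powers of the idempotent `s`). -/
noncomputable def S19 : Submonoid R19 := Submonoid.powers sbar19

/-- `R` is a `u`-`S`-semisimple ring: there is a uniform `s' ∈ S` such that every ideal
`I` admits `f : R → I` with `f(i) = s'·i` for all `i ∈ I`. -/
def IsUSSemisimpleRing {R : Type} [CommRing R] (S : Submonoid R) : Prop :=
  ∃ s ∈ S, ∀ I : Ideal R, ∃ f : R →ₗ[R] I, ∀ i ∈ I, ((f i : R)) = s * i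

lemma hT19 : ∀ t : T19, s19 * t = 0 ∨ s19 * t = s19 := by decide

lemma sbar19_idem : sbar19 * sbar19 = sbar19 := by
  unfold sbar19
  rw [← map_mul, ← C_mul]
  norm_num [show s19 * s19 = s19 from by decide]

lemma key19 (r : R19) : sbar19 * r = 0 ∨ sbar19 * r = sbar19 := by
  obtain ⟨p, rfl⟩ := Ideal.Quotient.mk_surjective r
  have h1 : (Ideal.Quotient.mk I19) (C s19 * (p.divX * X)) = 0 := by
    rw [Ideal.Quotient.eq_zero_iff_mem]
    have h : C s19 * (p.divX * X) = p.divX * (C s19 * X) := by ring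
    rw [h]
    exact Ideal.mul_mem_left _ _ (Ideal.subset_span (Set.mem_insert _ _))
  have h2 : sbar19 * (Ideal.Quotient.mk I19 p)
      = Ideal.Quotient.mk I19 (C (s19 * p.coeff 0)) := by
    conv_lhs => rw [← p.divX_mul_X_add]
    rw [sbar19, ← map_mul, mul_add, map_add, h1, zero_add, ← C_mul]
  rw [h2]
  rcases hT19 (p.coeff 0) with h | h <;> rw [h]
  · left; simp
  · right; rfl

lemma xbar19_ne : Ideal.Quotient.mk I19 X ≠ 0 := by
  rw [Ne, Ideal.Quotient.eq_zero_iff_mem, I19, Ideal.mem_span_pair]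
  rintro ⟨p, q, hpq⟩
  have h1 : (p * (C s19 * X) + q * X ^ 2).coeff 1 = (X : Polynomial T19).coeff 1 := by
    rw [hpq]
  rw [coeff_add, coeff_X_one, show p * (C s19 * X) = (p * C s19) * X by ring,
    show (1 : ℕ) = 0 + 1 from rfl, coeff_mul_X, coeff_mul_C,
    coeff_mul_X_pow'] at h1
  simp only [show ¬ (2 ≤ 0 + 1) by omega, if_false, add_zero] at h1
  have := congrArg Prod.snd h1
  simp [s19, Prod.snd_mul] at this

lemma semisimple_sq {A : Type*} [CommRing A] [IsSemisimpleRing A] (x : A)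
    (hx : x * x = 0) : x = 0 := by
  obtain ⟨e, he, hspan⟩ := IsSemisimpleRing.ideal_eq_span_idempotent (Ideal.span {x})
  have hex : x ∣ e := Ideal.mem_span_singleton.mp
    (hspan ▸ Ideal.subset_span rfl : e ∈ Ideal.span {x})
  obtain ⟨c, hc⟩ := hex
  have he0 : e = 0 := by
    have := he
    rw [IsIdempotentElem] at this
    calc e = e * e := this.symm
    _ = (x * c) * (x * c) := by rw [hc]
    _ = (x * x) * (c * c) := by ring
    _ = 0 := by rw [hx, zero_mul]
  have hx' : x ∈ Ideal.span ({e} : Set A) := hspan ▸ Ideal.subset_span rfl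
  rw [he0, Ideal.span_singleton_eq_bot.mpr rfl, Ideal.mem_bot] at hx'
  exact hx'

lemma xbar19_sq : Ideal.Quotient.mk I19 X * Ideal.Quotient.mk I19 X = 0 := by
  rw [← map_mul, ← sq, Ideal.Quotient.eq_zero_iff_mem]
  exact Ideal.subset_span (Set.mem_insert_of_mem _ rfl)

/-- `R = T[x]/⟨sx, x²⟩` with `S = {1, s}` is a `u`-`S`-semisimple ring
which is not semisimple (and indeed `S = {1, s̄}` and `R` is not reduced). -/
theorem uS_semisimple_not_semisimple_example :
    (S19 : Set R19) = {1, sbar19} ∧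
    IsUSSemisimpleRing (R := R19) S19 ∧
    ¬ IsSemisimpleRing R19 ∧
    ¬ IsReduced R19 := by
  refine ⟨?_, ?_, ?_, ?_⟩
  · ext r
    simp only [S19, SetLike.mem_coe, Submonoid.mem_powers_iff, Set.mem_insert_iff,
      Set.mem_singleton_iff]
    constructor
    · rintro ⟨n, rfl⟩
      cases n with
      | zero => left; rfl
      | succ m =>
        right
        induction m with
        | zero => rw [pow_one]
        | succ k ih => rw [pow_succ, ih, sbar19_idem]
    · rintro (rfl | rfl)
      · exact ⟨0, pow_zero _⟩
      · exact ⟨1, pow_one _⟩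
  · refine ⟨sbar19, ⟨1, pow_one _⟩, fun I => ?_⟩
    by_cases hs : sbar19 ∈ I
    · refine ⟨LinearMap.toSpanSingleton R19 I ⟨sbar19, hs⟩, fun i _ => ?_⟩
      simp only [LinearMap.toSpanSingleton_apply, SetLike.val_smul, smul_eq_mul]
      exact mul_comm i sbar19
    · refine ⟨0, fun i hi => ?_⟩
      rcases key19 i with h | h
      · simp [h]
      · exact absurd (h ▸ I.mul_mem_left sbar19 hi) hs
  · intro h
    exact xbar19_ne (semisimple_sq (A := R19) _ xbar19_sq)
  · intro h
    exact xbar19_ne (h.eq_zero _ ⟨2, by rw [sq, xbar19_sq]⟩)
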